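/- Let G be a directed graph decomposed into pieces P_1,…,P_m covering all edges, with boundaries ∂P_i as above, and for each piece P let C_{∂P} be a directed simple cycle on the vertices ∂P. Then G is strongly connected if and only if: (1) G is connected as an undirected graph, (2) the vertices of ∂R = ⋃ ∂P_i are pairwise strongly connected in G, and (3) for every piece P, the graph P ∪ C_{∂P} is strongly connected, provided every piece with V(P) ≠ V(G) has at least one boundary vertex whenever G is connected. -/

import Mathlib

/-- With a piece decomposition of `G` and, for each piece, a
directed cycle `C i` on its boundary `bP i` (edges within the boundary, making
the boundary strongly connected), `G` is strongly connected iff (1) `G` is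
connected as an undirected graph, (2) the total boundary is pairwise strongly
connected in `G`, and (3) each `P ∪ C_{∂P}` is strongly connected — provided
every piece with `VP i ≠ V(G)` has a nonempty boundary whenever `G` is connected. -/
theorem stmt7 {V I : Type*} (E : V → V → Prop) (EP : I → V → V → Prop)
    (hcover : ∀ u v, E u v ↔ ∃ i, EP i u v)
    (VP : I → Set V) (hVP : ∀ i, VP i = {v | ∃ u, EP i v u ∨ EP i u v})
    (bP : I → Set V) (hbP : ∀ i, bP i = {v | v ∈ VP i ∧ ∃ j, j ≠ i ∧ v ∈ VP j})
    (C : I → V → V → Prop)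
    (hC1 : ∀ i u v, C i u v → u ∈ bP i ∧ v ∈ bP i)
    (hC2 : ∀ i, ∀ u ∈ bP i, ∀ v ∈ bP i, Relation.ReflTransGen (C i) u v)
    (hbnd : (∀ u v : V, Relation.ReflTransGen (fun a c => E a c ∨ E c a) u v) →
      ∀ i, VP i ≠ Set.univ → (bP i).Nonempty) :
    (∀ u v : V, Relation.ReflTransGen E u v) ↔
      ((∀ u v : V, Relation.ReflTransGen (fun a c => E a c ∨ E c a) u v) ∧
       (∀ u ∈ ⋃ i, bP i, ∀ v ∈ ⋃ i, bP i, Relation.ReflTransGen E u v) ∧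
       (∀ i, ∀ u ∈ VP i, ∀ v ∈ VP i,
         Relation.ReflTransGen (fun a c => EP i a c ∨ C i a c) u v)) := by
  constructor
  · intro hsc
    refine ⟨fun u v => Relation.ReflTransGen.mono (fun a c h => Or.inl h) _ _ (hsc u v), fun u _ v _ => hsc u v, ?_⟩
    intro i u hu v hv
    by_cases hb : (bP i).Nonempty
    · obtain ⟨b0, hb0⟩ := hb
      -- from any vertex of the piece, reach some boundary vertex within the piece
      have reach : ∀ x y : V, Relation.ReflTransGen E x y → y ∈ bP i → x ∈ VP i →
          ∃ b ∈ bP i, Relation.ReflTransGen (fun a c => EP i a c ∨ C i a c) x b := by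
        intro x y hxy
        induction hxy using Relation.ReflTransGen.head_induction_on with
        | refl => exact fun hy _ => ⟨y, hy, .refl⟩
        | @head a c hac _ ih =>
          intro hy hx
          obtain ⟨j, hj⟩ := (hcover _ _).1 hac
          by_cases hji : j = i
          · rw [hji] at hj
            have hc : c ∈ VP i := by rw [hVP]; exact ⟨a, Or.inr hj⟩
            obtain ⟨b, hbmem, hpath⟩ := ih hy hc
            exact ⟨b, hbmem, .head (Or.inl hj) hpath⟩
          · refine ⟨a, ?_, .refl⟩
            rw [hbP]
            exact ⟨hx, j, hji, by rw [hVP]; exact ⟨c, Or.inl hj⟩⟩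
      -- any vertex of the piece is reachable from some boundary vertex within the piece
      have from_bnd : ∀ x y : V, Relation.ReflTransGen E x y → x ∈ bP i → y ∈ VP i →
          ∃ b ∈ bP i, Relation.ReflTransGen (fun a c => EP i a c ∨ C i a c) b y := by
        intro x y hxy
        induction hxy with
        | refl => exact fun hx _ => ⟨x, hx, .refl⟩
        | @tail w z _ hwz ih =>
          intro hx hz
          obtain ⟨j, hj⟩ := (hcover _ _).1 hwz
          by_cases hji : j = i
          · rw [hji] at hj
            have hw : w ∈ VP i := by rw [hVP]; exact ⟨z, Or.inl hj⟩
            obtain ⟨b, hbmem, hpath⟩ := ih hx hw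
            exact ⟨b, hbmem, hpath.tail (Or.inl hj)⟩
          · refine ⟨z, ?_, .refl⟩
            rw [hbP]
            exact ⟨hz, j, hji, by rw [hVP]; exact ⟨w, Or.inr hj⟩⟩
      obtain ⟨b1, hb1, p1⟩ := reach u b0 (hsc u b0) hb0 hu
      obtain ⟨b2, hb2, p2⟩ := from_bnd b0 v (hsc b0 v) hb0 hv
      have pc : Relation.ReflTransGen (fun a c => EP i a c ∨ C i a c) b1 b2 :=
        Relation.ReflTransGen.mono (fun a c h => Or.inr h) _ _ (hC2 i b1 hb1 b2 hb2)
      exact (p1.trans pc).trans p2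
    · rw [Set.not_nonempty_iff_eq_empty] at hb
      have stay : ∀ x y : V, Relation.ReflTransGen E x y → x ∈ VP i →
          Relation.ReflTransGen (EP i) x y := by
        intro x y hxy
        induction hxy using Relation.ReflTransGen.head_induction_on with
        | refl => exact fun _ => .refl
        | @head a c hac _ ih =>
          intro hx
          obtain ⟨j, hj⟩ := (hcover _ _).1 hac
          have hji : j = i := by
            by_contra hji
            have : a ∈ bP i := by
              rw [hbP]
              exact ⟨hx, j, hji, by rw [hVP]; exact ⟨c, Or.inl hj⟩⟩
            rw [hb] at this; exact this
          rw [hji] at hj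
          have hc : c ∈ VP i := by rw [hVP]; exact ⟨a, Or.inr hj⟩
          exact .head hj (ih hc)
      exact Relation.ReflTransGen.mono (fun a c h => Or.inl h) _ _ (stay u v (hsc u v) hu)
  · rintro ⟨h1, h2, h3⟩ u v
    have lift : ∀ i (x y : V), Relation.ReflTransGen (fun a c => EP i a c ∨ C i a c) x y →
        Relation.ReflTransGen E x y := by
      intro i x y hxy
      induction hxy with
      | refl => exact .refl
      | tail _ he ih =>
        rcases he with he | he
        · exact ih.tail ((hcover _ _).2 ⟨i, he⟩)
        · obtain ⟨ha, hbm⟩ := hC1 i _ _ he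
          exact ih.trans (h2 _ (Set.mem_iUnion.2 ⟨i, ha⟩) _ (Set.mem_iUnion.2 ⟨i, hbm⟩))
    have step : ∀ a c : V, (E a c ∨ E c a) → Relation.ReflTransGen E a c := by
      intro a c h
      rcases h with h | h
      · exact .single h
      · obtain ⟨i, hi⟩ := (hcover _ _).1 h
        have ha : a ∈ VP i := by rw [hVP]; exact ⟨c, Or.inr hi⟩
        have hc : c ∈ VP i := by rw [hVP]; exact ⟨a, Or.inl hi⟩
        exact lift i a c (h3 i a ha c hc)
    induction (h1 u v) with
    | refl => exact .refl
    | tail _ he ih => exact ih.trans (step _ _ he)
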